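/- Suppose dim H ≥ 2 and dim H̄ ≥ 2. If the vacuum state φ is a trace on the von Neumann algebra generated by the quadrabasic Gaussian operators {G_{ξ⊗η}}, i.e., φ(G₁G₂G₃G₄) = φ(G₂G₃G₄G₁) for all choices of vectors, then necessarily q = v = 0 and t = w = 1. Specifically: from the fourth-moment formula, traciality forces 1 − tv − tw = 0 (taking ξ₁=ξ₂ ⊥ ξ₃=ξ₄ unit vectors and all η_i equal and unitary) and 1 − tw = 0 (taking additionally η₁=η₂ ⊥ η₃=η₄), whence (with |t|,|w| ≤ 1) t = w = 1 and v = 0; symmetrically q = 0. -/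

import Mathlib

open scoped RealInnerProductSpace

/-- The fourth mixed moment of quadrabasic Gaussian operators, as a function of the
eight vectors. -/
noncomputable def fourthMoment {H K : Type*} [NormedAddCommGroup H] [InnerProductSpace ℝ H]
    [NormedAddCommGroup K] [InnerProductSpace ℝ K] (q t v w : ℝ)
    (ξ₁ ξ₂ ξ₃ ξ₄ : H) (η₁ η₂ η₃ η₄ : K) : ℝ :=
  ⟪ξ₁, ξ₂⟫ * ⟪ξ₃, ξ₄⟫ * ⟪η₁, η₂⟫ * ⟪η₃, η₄⟫ +
  q * v * (⟪ξ₁, ξ₃⟫ * ⟪ξ₂, ξ₄⟫ * ⟪η₁, η₃⟫ * ⟪η₂, η₄⟫) +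
  q * w * (⟪ξ₁, ξ₃⟫ * ⟪ξ₂, ξ₄⟫ * ⟪η₁, η₄⟫ * ⟪η₂, η₃⟫) +
  t * v * (⟪ξ₁, ξ₄⟫ * ⟪ξ₂, ξ₃⟫ * ⟪η₁, η₃⟫ * ⟪η₂, η₄⟫) +
  t * w * (⟪ξ₁, ξ₄⟫ * ⟪ξ₂, ξ₃⟫ * ⟪η₁, η₄⟫ * ⟪η₂, η₃⟫)

/-- If `dim H ≥ 2` and `dim K ≥ 2`, `|q| ≤ t ≤ 1`, `|v| ≤ w ≤ 1`, and the vacuum state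
on the quadrabasic Gaussian algebra is a trace — i.e. the fourth mixed moment
`φ(G₁G₂G₃G₄)` is invariant under the cyclic shift `(1,2,3,4) ↦ (2,3,4,1)` for all
choices of vectors — then necessarily `q = v = 0` and `t = w = 1`. -/
lemma exists_orthonormal_pair {H : Type*} [NormedAddCommGroup H] [InnerProductSpace ℝ H]
    (hH : 2 ≤ Module.rank ℝ H) :
    ∃ e f : H, ‖e‖ = 1 ∧ ‖f‖ = 1 ∧ ⟪e, f⟫ = 0 := by
  have h1 : (1 : Cardinal) < Module.rank ℝ H := lt_of_lt_of_le (by norm_num) hH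
  have hpos : 0 < Module.rank ℝ H := lt_trans (by norm_num) h1
  obtain ⟨x, hx⟩ := (rank_pos_iff_exists_ne_zero (R := ℝ)).mp hpos
  obtain ⟨y, hy⟩ := exists_linearIndependent_pair_of_one_lt_rank h1 hx
  set z : H := y - (⟪x, y⟫ / ⟪x, x⟫) • x with hz
  have hxx : ⟪x, x⟫ ≠ 0 := fun h => hx (inner_self_eq_zero.mp h)
  have hzx : ⟪x, z⟫ = 0 := by
    simp [hz, inner_sub_right, inner_smul_right]
    field_simp
    ring
  have hz0 : z ≠ 0 := by
    intro h
    exact ((LinearIndependent.pair_iff' hx).mp hy) (⟪x, y⟫ / ⟪x, x⟫) ((sub_eq_zero.mp h).symm)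
  refine ⟨‖x‖⁻¹ • x, ‖z‖⁻¹ • z, ?_, ?_, ?_⟩
  · rw [norm_smul]; simp [norm_ne_zero_iff.mpr hx]
  · rw [norm_smul]; simp [norm_ne_zero_iff.mpr hz0]
  · rw [inner_smul_left, inner_smul_right, hzx]; ring

theorem trace_implies_free {H K : Type*} [NormedAddCommGroup H] [InnerProductSpace ℝ H]
    [NormedAddCommGroup K] [InnerProductSpace ℝ K]
    (hH : 2 ≤ Module.rank ℝ H) (hK : 2 ≤ Module.rank ℝ K)
    (q t v w : ℝ) (hq : |q| ≤ t) (ht : t ≤ 1) (hv : |v| ≤ w) (hw : w ≤ 1)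
    (htrace : ∀ (ξ₁ ξ₂ ξ₃ ξ₄ : H) (η₁ η₂ η₃ η₄ : K),
      fourthMoment q t v w ξ₁ ξ₂ ξ₃ ξ₄ η₁ η₂ η₃ η₄ =
        fourthMoment q t v w ξ₂ ξ₃ ξ₄ ξ₁ η₂ η₃ η₄ η₁) :
    q = 0 ∧ v = 0 ∧ t = 1 ∧ w = 1 := by
  obtain ⟨e, f, he, hf, hef⟩ := exists_orthonormal_pair hH
  obtain ⟨u, u', hu, hu', huu⟩ := exists_orthonormal_pair hK
  have hfe : ⟪f, e⟫ = 0 := by rw [real_inner_comm]; exact hef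
  have huu' : ⟪u', u⟫ = 0 := by rw [real_inner_comm]; exact huu
  have hee : ⟪e, e⟫ = (1:ℝ) := by
    rw [real_inner_self_eq_norm_mul_norm, he]; norm_num
  have hff : ⟪f, f⟫ = (1:ℝ) := by
    rw [real_inner_self_eq_norm_mul_norm, hf]; norm_num
  have huu1 : ⟪u, u⟫ = (1:ℝ) := by
    rw [real_inner_self_eq_norm_mul_norm, hu]; norm_num
  have huu'1 : ⟪u', u'⟫ = (1:ℝ) := by
    rw [real_inner_self_eq_norm_mul_norm, hu']; norm_num
  have eA := htrace e e f f u u u u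
  have eB := htrace e e f f u u u' u'
  have eC := htrace e f e f u u u' u'
  simp only [fourthMoment, hee, hff, hef, hfe, huu1, huu'1, huu, huu'] at eA eB eC
  norm_num at eA eB eC
  have ht0 : 0 ≤ t := le_trans (abs_nonneg q) hq
  have hw0 : 0 ≤ w := le_trans (abs_nonneg v) hv
  have hw1 : w = 1 := by nlinarith
  have ht1 : t = 1 := by nlinarith
  have hv0 : v = 0 := by nlinarith
  have hq0 : q = 0 := by
    rcases eC with h | h
    · exact h
    · rw [h] at hw1; norm_num at hw1
  exact ⟨hq0, hv0, ht1, hw1⟩
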